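/- Let M be a profinite module over an artinian local ring R with finite residue field, T a continuous R-linear endomorphism, and V an open submodule of M. Then ⋂_{n≥0} T^{−n}(V) is open if and only if there exists n ≥ 1 with ⋂_{i=0}^{n−1} T^{−i}(V) ⊆ T^{−n}(V). -/

import Mathlib

open Filter Topology

/-- Let `M` be a profinite module over an artinian local ring `R` with finite
residue field, `T` a continuous `R`-linear endomorphism, and `V` an open
submodule of `M`.  Then `⋂_{n ≥ 0} T^{-n}(V)` is open iff there exists `n ≥ 1`
with `⋂_{i=0}^{n-1} T^{-i}(V) ⊆ T^{-n}(V)`. -/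
theorem statement8 (R : Type*) [CommRing R] [IsArtinianRing R] [IsLocalRing R]
    [Finite (IsLocalRing.ResidueField R)]
    (M : Type*) [AddCommGroup M] [Module R M] [TopologicalSpace M]
    [IsTopologicalAddGroup M] [CompactSpace M] [T2Space M]
    [TotallyDisconnectedSpace M]
    (hbasis : ∀ U ∈ 𝓝 (0 : M), ∃ W : Submodule R M,
      IsOpen (W : Set M) ∧ Finite (M ⧸ W) ∧ (W : Set M) ⊆ U)
    (T : Module.End R M) (hT : Continuous T)
    (V : Submodule R M) (hV : IsOpen (V : Set M)) :
    IsOpen ((⨅ n : ℕ, V.comap (T ^ n)) : Set M) ↔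
      ∃ n : ℕ, 1 ≤ n ∧ (⨅ i ∈ Finset.range n, V.comap (T ^ i)) ≤ V.comap (T ^ n) := by
  have hpow : ∀ n : ℕ, Continuous ⇑(T ^ n) := by
    intro n
    induction n with
    | zero => simpa [Module.End.one_eq_id] using continuous_id
    | succ k ih =>
      have : ⇑(T ^ (k + 1)) = ⇑(T ^ k) ∘ ⇑T := by
        ext x; simp [pow_succ, Module.End.mul_apply]
      rw [this]; exact ih.comp hT
  have hopen : ∀ n : ℕ, IsOpen ((V.comap (T ^ n) : Submodule R M) : Set M) := by
    intro n
    have : ((V.comap (T ^ n) : Submodule R M) : Set M) = ⇑(T ^ n) ⁻¹' V := rfl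
    rw [this]; exact hV.preimage (hpow n)
  have hinf : ((⨅ n : ℕ, V.comap (T ^ n)) : Set M) =
      ⋂ n : ℕ, ((V.comap (T ^ n) : Submodule R M) : Set M) := by
    ext x; simp [Submodule.mem_iInf]
  constructor
  · -- openness implies stabilization, by compactness
    intro hW
    have hKc : IsCompact (((⨅ n : ℕ, V.comap (T ^ n)) : Set M)ᶜ) :=
      hW.isClosed_compl.isCompact
    have hclosed : ∀ n : ℕ, IsClosed ((V.comap (T ^ n) : Submodule R M) : Set M) :=
      fun n => (V.comap (T ^ n)).toAddSubgroup.isClosed_of_isOpen (hopen n)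
    have hempty : (((⨅ n : ℕ, V.comap (T ^ n)) : Set M)ᶜ ∩
        ⋂ n : ℕ, ((V.comap (T ^ n) : Submodule R M) : Set M)) = ∅ := by
      rw [← hinf]; exact Set.compl_inter_self _
    obtain ⟨t, ht⟩ := hKc.elim_finite_subfamily_closed _ hclosed hempty
    have hsub : (⋂ n ∈ t, ((V.comap (T ^ n) : Submodule R M) : Set M)) ⊆
        ((⨅ n : ℕ, V.comap (T ^ n)) : Set M) := by
      intro x hx
      by_contra hxn
      exact Set.eq_empty_iff_forall_notMem.mp ht x ⟨hxn, hx⟩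
    set n := t.sup id + 1 with hn
    refine ⟨n, Nat.le_add_left 1 _, ?_⟩
    intro x hx
    have hx' : ∀ i ∈ Finset.range n, x ∈ V.comap (T ^ i) := by
      simpa [Submodule.mem_iInf] using hx
    have hxt : x ∈ ⋂ m ∈ t, ((V.comap (T ^ m) : Submodule R M) : Set M) := by
      simp only [Set.mem_iInter]
      intro m hm
      exact hx' m (Finset.mem_range.mpr (Nat.lt_succ_of_le (Finset.le_sup (f := id) hm)))
    have := hsub hxt
    rw [hinf] at this
    exact Set.mem_iInter.mp this n
  · -- stabilization implies openness
    rintro ⟨n, hn1, h⟩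
    set P := ⨅ i ∈ Finset.range n, V.comap (T ^ i) with hP
    have hmemP : ∀ x : M, x ∈ P ↔ ∀ i < n, (T ^ i) x ∈ V := by
      intro x; simp [hP, Submodule.mem_iInf]
    have stab : ∀ x ∈ P, T x ∈ P := by
      intro x hx
      rw [hmemP] at hx ⊢
      intro i hi
      have : (T ^ i) (T x) = (T ^ (i + 1)) x := by
        simp [pow_succ, Module.End.mul_apply]
      rw [this]
      rcases lt_or_eq_of_le (Nat.succ_le_of_lt hi) with h' | h'
      · exact hx _ h'
      · rw [show i + 1 = n from h']
        exact h ((hmemP x).mpr hx)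
    have key : ∀ m : ℕ, ∀ x ∈ P, (T ^ m) x ∈ V := by
      intro m
      induction m with
      | zero => intro x hx; simpa using (hmemP x).mp hx 0 hn1
      | succ k ih =>
        intro x hx
        have : (T ^ (k + 1)) x = (T ^ k) (T x) := by
          simp [pow_succ, Module.End.mul_apply]
        rw [this]
        exact ih _ (stab x hx)
    have heq : (⨅ m : ℕ, V.comap (T ^ m)) = P := by
      apply le_antisymm
      · intro x hx
        rw [hmemP]
        intro i _
        exact (Submodule.mem_iInf _).mp hx i
      · intro x hx
        rw [Submodule.mem_iInf]
        intro m
        exact key m x hx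
    have hPopen : IsOpen (P : Set M) := by
      have : (P : Set M) = ⋂ i ∈ Finset.range n, ⇑(T ^ i) ⁻¹' (V : Set M) := by
        ext x; simp [hP, Submodule.mem_iInf]
      rw [this]
      exact isOpen_biInter_finset fun i _ => hV.preimage (hpow i)
    have hset : (⨅ m : ℕ, ((V.comap (T ^ m) : Submodule R M) : Set M)) = (P : Set M) := by
      rw [hinf]; ext x
      simp only [Set.mem_iInter, SetLike.mem_coe, ← heq, Submodule.mem_iInf]
    rw [hset]
    exact hPopen
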